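/- Define η_{2,m} = Σ_{r=0}^{⌊m/2⌋} C(m,2r) 2^r (2r-1)!!. Then the series Σ_{m=0}^∞ ((-1)^m / (2^m m!)) η_{2,m} converges absolutely to e^{-1/4}. -/

import Mathlib

open scoped Nat

lemma dfac_mul (r : ℕ) : ((2 * r - 1)‼ : ℕ) * (2 ^ r * r !) = (2 * r)! := by
  induction r with
  | zero => simp
  | succ n ih =>
    have h1 : 2 * (n + 1) - 1 = (2 * n - 1) + 2 ∨ n = 0 := by omega
    rcases h1 with h1 | rfl
    · rw [h1, Nat.doubleFactorial_add_two]
      have h3 : 2 * n - 1 + 2 = 2 * n + 1 := by omega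
      have h5 : (2 * (n + 1))! = (2 * n + 2) * ((2 * n + 1) * (2 * n)!) := by
        rw [(by ring : 2 * (n + 1) = 2 * n + 1 + 1), Nat.factorial_succ, Nat.factorial_succ]
      calc (2 * n - 1 + 2) * (2 * n - 1)‼ * (2 ^ (n + 1) * (n + 1)!)
          = (2 * n + 2) * ((2 * n + 1) * ((2 * n - 1)‼ * (2 ^ n * n !))) := by
            rw [h3, Nat.factorial_succ, pow_succ]; ring
        _ = (2 * n + 2) * ((2 * n + 1) * (2 * n)!) := by rw [ih]
        _ = (2 * (n + 1))! := h5.symm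
    · simp [Nat.doubleFactorial, Nat.factorial]

open scoped Nat in
/-- With `η_{2,m} = Σ_{r=0}^{⌊m/2⌋} C(m,2r) 2^r (2r-1)!!`, the series
`Σ_{m≥0} ((-1)^m/(2^m m!)) η_{2,m}` converges absolutely to `e^{-1/4}`. -/
theorem eta_two_series_eq_exp_neg_quarter :
    (Summable fun m : ℕ => |((-1 : ℝ) ^ m / (2 ^ m * m.factorial)) *
        ∑ r ∈ Finset.range (m / 2 + 1),
          (m.choose (2 * r) : ℝ) * 2 ^ r * ((2 * r - 1)‼ : ℝ)|) ∧
    (∑' m : ℕ, ((-1 : ℝ) ^ m / (2 ^ m * m.factorial)) *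
        ∑ r ∈ Finset.range (m / 2 + 1),
          (m.choose (2 * r) : ℝ) * 2 ^ r * ((2 * r - 1)‼ : ℝ)) =
      Real.exp (-(1 / 4)) := by
  set g : ℕ × ℕ → ℝ := fun p =>
    if 2 * p.2 ≤ p.1 then (-1 : ℝ) ^ p.1 / (2 ^ p.1 * (p.1 - 2 * p.2)! * p.2 !) else 0 with hg_def
  set F : ℕ → ℝ := fun r => ((1 : ℝ) / 4) ^ r / (r ! : ℝ)
  set G : ℕ → ℝ := fun k => ((-1 : ℝ) / 2) ^ k / (k ! : ℝ)
  have hF : Summable fun r => ‖F r‖ := by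
    refine (Real.summable_pow_div_factorial (1 / 4 : ℝ)).congr fun r => ?_
    rw [Real.norm_eq_abs, abs_of_nonneg (by positivity)]
  have hG : Summable fun k => ‖G k‖ := by
    refine (Real.summable_pow_div_factorial (1 / 2 : ℝ)).congr fun k => ?_
    rw [Real.norm_eq_abs, abs_div, abs_pow]
    rw [show |(-1 : ℝ) / 2| = 1 / 2 by rw [abs_div]; norm_num]
    norm_num [G]
  have hf : Summable fun p : ℕ × ℕ => F p.1 * G p.2 := summable_mul_of_summable_norm hF hG
  set ψ : ℕ × ℕ → ℕ × ℕ := fun p => (p.2 + 2 * p.1, p.1) with hψ_def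
  have hinj : Function.Injective ψ := by
    intro p q h
    simp only [ψ, Prod.mk.injEq] at h
    exact Prod.ext h.2 (by omega)
  have hcomp : ∀ p : ℕ × ℕ, g (ψ p) = F p.1 * G p.2 := by
    intro ⟨r, k⟩
    simp only [g, ψ, F, G]
    rw [if_pos (by omega : 2 * r ≤ k + 2 * r)]
    have hk : k + 2 * r - 2 * r = k := by omega
    rw [hk, pow_add, pow_add, pow_mul, pow_mul]
    have hkf : ((k ! : ℝ)) ≠ 0 := Nat.cast_ne_zero.2 k.factorial_ne_zero
    have hrf : ((r ! : ℝ)) ≠ 0 := Nat.cast_ne_zero.2 r.factorial_ne_zero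
    norm_num
    field_simp
    simp only [div_pow, one_pow]
    field_simp
    rw [← mul_pow]
    norm_num
  have hzero : ∀ p ∉ Set.range ψ, g p = 0 := by
    intro ⟨m, r⟩ hp
    by_cases h : 2 * r ≤ m
    · refine absurd ⟨(r, m - 2 * r), ?_⟩ hp
      simp only [ψ, Prod.mk.injEq]
      exact ⟨by omega, trivial⟩
    · simp only [g, if_neg h]
  have hsupp : Function.support g ⊆ Set.range ψ := fun p hp => by
    by_contra hc; exact hp (hzero p hc)
  have hg : Summable g :=
    (hinj.summable_iff hzero).mp (hf.congr fun p => (hcomp p).symm)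
  -- inner sums
  have hterm : ∀ m : ℕ, ((-1 : ℝ) ^ m / (2 ^ m * m.factorial)) *
      ∑ r ∈ Finset.range (m / 2 + 1),
        (m.choose (2 * r) : ℝ) * 2 ^ r * ((2 * r - 1)‼ : ℝ)
      = ∑ r ∈ Finset.range (m / 2 + 1), g (m, r) := by
    intro m
    rw [Finset.mul_sum]
    refine Finset.sum_congr rfl fun r hr => ?_
    have hrm : 2 * r ≤ m := by
      have := Finset.mem_range.mp hr; omega
    simp only [g, if_pos hrm]
    have key : (m.choose (2 * r) : ℝ) * 2 ^ r * ((2 * r - 1)‼ : ℝ) * ((m - 2 * r)! * r !)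
        = (m ! : ℝ) := by
      have hnat : m.choose (2 * r) * (2 ^ r * ((2 * r - 1)‼)) * ((m - 2 * r)! * r !) = m ! := by
        have h1 := Nat.choose_mul_factorial_mul_factorial hrm
        have h2 := dfac_mul r
        calc m.choose (2 * r) * (2 ^ r * ((2 * r - 1)‼)) * ((m - 2 * r)! * r !)
            = m.choose (2 * r) * ((2 * r - 1)‼ * (2 ^ r * r !)) * (m - 2 * r)! := by ring
          _ = m.choose (2 * r) * (2 * r)! * (m - 2 * r)! := by rw [h2]
          _ = m ! := h1
      have := congrArg (Nat.cast : ℕ → ℝ) hnat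
      push_cast at this
      linarith [this]
    have hmf : ((m ! : ℝ)) ≠ 0 := Nat.cast_ne_zero.2 m.factorial_ne_zero
    have h2m : ((2 : ℝ) ^ m) ≠ 0 := by positivity
    have hmr : (((m - 2 * r)! : ℝ)) ≠ 0 := Nat.cast_ne_zero.2 (Nat.factorial_ne_zero _)
    have hrf : ((r ! : ℝ)) ≠ 0 := Nat.cast_ne_zero.2 r.factorial_ne_zero
    field_simp
    linear_combination key
  -- finite sums equal fiber tsums
  have hfib : ∀ m : ℕ, (∑ r ∈ Finset.range (m / 2 + 1), g (m, r)) = ∑' r, g (m, r) := by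
    intro m
    refine (tsum_eq_sum fun r hr => ?_).symm
    have : ¬ 2 * r ≤ m := by
      have := Finset.mem_range.not.mp hr; omega
    simp only [g, if_neg this]
  -- value of the double sum
  have hval : ∑' p : ℕ × ℕ, g p = Real.exp (-(1 / 4)) := by
    have h1 : ∑' p : ℕ × ℕ, g p = ∑' p : ℕ × ℕ, F p.1 * G p.2 := by
      rw [← hinj.tsum_eq hsupp]
      exact tsum_congr hcomp
    rw [h1, ← tsum_mul_tsum_of_summable_norm hF hG]
    have hFe : ∑' r, F r = Real.exp (1 / 4) := by
      rw [Real.exp_eq_exp_ℝ, NormedSpace.exp_eq_tsum_div]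
    have hGe : ∑' k, G k = Real.exp (-(1 / 2)) := by
      rw [Real.exp_eq_exp_ℝ, NormedSpace.exp_eq_tsum_div]
      exact tsum_congr fun k => by norm_num [G]
    rw [hFe, hGe, ← Real.exp_add]
    norm_num
  constructor
  · -- absolute summability
    have habs : Summable fun p : ℕ × ℕ => |g p| := hg.abs
    have hpair := (summable_prod_of_nonneg (fun p => abs_nonneg (g p))).mp habs
    refine Summable.of_nonneg_of_le (fun m => abs_nonneg _)
      (fun m => ?_) hpair.2
    rw [hterm m]
    calc |∑ r ∈ Finset.range (m / 2 + 1), g (m, r)|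
        ≤ ∑ r ∈ Finset.range (m / 2 + 1), |g (m, r)| := Finset.abs_sum_le_sum_abs _ _
      _ = ∑' r, |g (m, r)| := by
          refine (tsum_eq_sum fun r hr => ?_).symm
          have : ¬ 2 * r ≤ m := by
            have := Finset.mem_range.not.mp hr; omega
          simp only [g, if_neg this, abs_zero]
  · -- value
    calc (∑' m : ℕ, ((-1 : ℝ) ^ m / (2 ^ m * m.factorial)) *
          ∑ r ∈ Finset.range (m / 2 + 1),
            (m.choose (2 * r) : ℝ) * 2 ^ r * ((2 * r - 1)‼ : ℝ))
        = ∑' m : ℕ, ∑' r : ℕ, g (m, r) := by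
          refine tsum_congr fun m => ?_
          rw [hterm m, hfib m]
      _ = ∑' p : ℕ × ℕ, g p := (Summable.tsum_prod hg).symm
      _ = Real.exp (-(1 / 4)) := hval
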